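/- Let Z be a finite alphabet with q := |Z| ≥ 2, let Ω be a finite nonempty set, let p be a probability mass function on Ω, and let C : Ω → List Z be an injective (non-singular) code all of whose codewords are nonempty strings. Then the expected codeword length satisfies ∑_{w ∈ Ω} p(w)·length(C(w)) ≥ H_q(p) − 2·log_q(H_q(p) + q), where H_q(p) := ∑_{w ∈ Ω} p(w)·log_q(1/p(w)) is the base-q Shannon entropy (with the convention 0·log(1/0) = 0). -/

import Mathlib

open Finset

private lemma telescope_sum (N : ℕ) :
    ∑ n ∈ Finset.Icc 1 N, (1 : ℝ) / (n * (n + 1)) ≤ 1 := by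
  have h : ∀ M : ℕ, ∑ n ∈ Finset.Icc 1 M, (1 : ℝ) / (n * (n + 1)) = 1 - 1 / (M + 1) := by
    intro M
    induction M with
    | zero => simp
    | succ M ih =>
      rw [Finset.sum_Icc_succ_top (by omega), ih]
      have h1 : ((M : ℝ) + 1) ≠ 0 := by positivity
      have h2 : ((M : ℝ) + 1 + 1) ≠ 0 := by positivity
      push_cast
      field_simp
      ring
  rw [h]
  have : (0 : ℝ) ≤ 1 / (N + 1) := by positivity
  linarith

private lemma gibbs_ineq {Ω : Type*} [Fintype Ω] {Q : ℝ} (hQ : 1 < Q)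
    (p r : Ω → ℝ) (hp0 : ∀ w, 0 ≤ p w) (hp1 : ∑ w, p w = 1)
    (hr : ∀ w, 0 < r w) (hr1 : ∑ w, r w ≤ 1) :
    ∑ w, p w * Real.logb Q (1 / p w) ≤ ∑ w, p w * Real.logb Q (1 / r w) := by
  have hlog : 0 < Real.log Q := Real.log_pos hQ
  have key : ∀ w, p w * Real.logb Q (1 / p w) - p w * Real.logb Q (1 / r w) ≤
      (r w - p w) / Real.log Q := by
    intro w
    rcases eq_or_lt_of_le (hp0 w) with h | h
    · rw [← h]
      simp only [zero_mul, sub_zero]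
      exact div_nonneg (hr w).le hlog.le
    · have hrw := hr w
      have heq : Real.logb Q (1 / p w) - Real.logb Q (1 / r w) =
          Real.log (r w / p w) / Real.log Q := by
        rw [Real.logb, Real.logb, div_sub_div_same, one_div, one_div,
          Real.log_inv, Real.log_inv, Real.log_div hrw.ne' h.ne']
        ring_nf
      have hlb : Real.log (r w / p w) ≤ r w / p w - 1 :=
        Real.log_le_sub_one_of_pos (by positivity)
      have : p w * (Real.log (r w / p w) / Real.log Q) ≤ (r w - p w) / Real.log Q := by
        rw [mul_div_assoc', div_le_div_iff_of_pos_right hlog]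
        calc p w * Real.log (r w / p w) ≤ p w * (r w / p w - 1) := by
              exact mul_le_mul_of_nonneg_left hlb h.le
          _ = r w - p w := by field_simp
      calc p w * Real.logb Q (1 / p w) - p w * Real.logb Q (1 / r w)
          = p w * (Real.logb Q (1 / p w) - Real.logb Q (1 / r w)) := by ring
        _ = p w * (Real.log (r w / p w) / Real.log Q) := by rw [heq]
        _ ≤ (r w - p w) / Real.log Q := this
  have hsum : ∑ w, (p w * Real.logb Q (1 / p w) - p w * Real.logb Q (1 / r w)) ≤
      ∑ w, (r w - p w) / Real.log Q := Finset.sum_le_sum fun w _ => key w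
  rw [Finset.sum_sub_distrib] at hsum
  have : ∑ w, (r w - p w) / Real.log Q = ((∑ w, r w) - 1) / Real.log Q := by
    rw [← Finset.sum_div, Finset.sum_sub_distrib, hp1]
  rw [this] at hsum
  have hnp : ((∑ w, r w) - 1) / Real.log Q ≤ 0 :=
    div_nonpos_of_nonpos_of_nonneg (by linarith) hlog.le
  linarith

private lemma count_fiber {Z Ω : Type*} [Fintype Z] [Fintype Ω] [DecidableEq Ω]
    (C : Ω → List Z) (hC : Function.Injective C) (n : ℕ) :
    (Finset.univ.filter (fun w => (C w).length = n)).card ≤ Fintype.card Z ^ n := by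
  classical
  have : (Finset.univ.filter (fun w => (C w).length = n)).card ≤
      ((Finset.univ : Finset (List.Vector Z n)).image List.Vector.toList).card := by
    apply Finset.card_le_card_of_injOn C
    · intro w hw
      simp only [Finset.mem_coe, Finset.mem_filter, Finset.mem_univ, true_and] at hw
      exact Finset.mem_image.mpr ⟨⟨C w, hw⟩, Finset.mem_univ _, rfl⟩
    · exact fun a _ b _ h => hC h
  refine this.trans ?_
  calc ((Finset.univ : Finset (List.Vector Z n)).image List.Vector.toList).card
      ≤ (Finset.univ : Finset (List.Vector Z n)).card := Finset.card_image_le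
    _ = Fintype.card Z ^ n := by rw [Finset.card_univ, card_vector]

/-- Lower bound on expected length of the best non-singular code
(adapted from Leung-Yan-Cheong–Cover). -/
theorem stmt_0 {Z Ω : Type*} [Fintype Z] [Fintype Ω] [Nonempty Ω]
    (hq : 2 ≤ Fintype.card Z)
    (p : Ω → ℝ) (hp0 : ∀ w, 0 ≤ p w) (hp1 : ∑ w, p w = 1)
    (C : Ω → List Z) (hC : Function.Injective C) (hne : ∀ w, C w ≠ []) :
    ∑ w, p w * ((C w).length : ℝ) ≥
      (∑ w, p w * Real.logb (Fintype.card Z) (1 / p w)) -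
        2 * Real.logb (Fintype.card Z)
          ((∑ w, p w * Real.logb (Fintype.card Z) (1 / p w)) + (Fintype.card Z : ℝ)) := by
  classical
  set Q : ℝ := (Fintype.card Z : ℝ) with hQdef
  have hQ2 : (2 : ℝ) ≤ Q := by rw [hQdef]; exact_mod_cast hq
  have hQ1 : 1 < Q := by linarith
  have hQ0 : 0 < Q := by linarith
  have hlogQ : 0 < Real.log Q := Real.log_pos hQ1
  set ℓ : Ω → ℕ := fun w => (C w).length with hℓdef
  have hℓ1 : ∀ w, 1 ≤ ℓ w := fun w => List.length_pos_iff.mpr (hne w)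
  set L : ℝ := ∑ w, p w * (ℓ w : ℝ) with hLdef
  set H : ℝ := ∑ w, p w * Real.logb Q (1 / p w) with hHdef
  -- basic positivity facts
  have hpw1 : ∀ w, p w ≤ 1 := by
    intro w
    calc p w ≤ ∑ w, p w := Finset.single_le_sum (fun w _ => hp0 w) (Finset.mem_univ w)
      _ = 1 := hp1
  have hH0 : 0 ≤ H := by
    apply Finset.sum_nonneg
    intro w _
    rcases eq_or_lt_of_le (hp0 w) with h | h
    · rw [← h]; simp
    · apply mul_nonneg h.le
      apply Real.logb_nonneg hQ1
      rw [le_div_iff₀ h, one_mul]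
      exact hpw1 w
  have hL0 : 0 ≤ L := Finset.sum_nonneg fun w _ => mul_nonneg (hp0 w) (by positivity)
  -- key inequality : H ≤ L + 2 * logb Q (L + 1)
  have key : H ≤ L + 2 * Real.logb Q (L + 1) := by
    set r : Ω → ℝ := fun w => (Q ^ ℓ w)⁻¹ * (1 / ((ℓ w : ℝ) * ((ℓ w : ℝ) + 1))) with hrdef
    have hrpos : ∀ w, 0 < r w := by
      intro w
      have := hℓ1 w
      have h1 : (0:ℝ) < (ℓ w : ℝ) := by exact_mod_cast this
      positivity
    -- counting bound: ∑ r ≤ 1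
    have hrsum : ∑ w, r w ≤ 1 := by
      set N := Finset.univ.sup ℓ with hNdef
      have hcomp : ∑ w, r w = ∑ n ∈ Finset.univ.image ℓ,
          (Finset.univ.filter (fun w => ℓ w = n)).card •
            ((Q ^ n)⁻¹ * (1 / ((n : ℝ) * ((n : ℝ) + 1)))) := by
        exact Finset.sum_comp (s := (Finset.univ : Finset Ω))
          (fun n : ℕ => (Q ^ n)⁻¹ * (1 / ((n : ℝ) * ((n : ℝ) + 1)))) ℓ
      rw [hcomp]
      have hsub : Finset.univ.image ℓ ⊆ Finset.Icc 1 N := by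
        intro n hn
        rw [Finset.mem_image] at hn
        obtain ⟨w, _, rfl⟩ := hn
        exact Finset.mem_Icc.mpr ⟨hℓ1 w, Finset.le_sup (Finset.mem_univ w)⟩
      calc ∑ n ∈ Finset.univ.image ℓ,
            (Finset.univ.filter (fun w => ℓ w = n)).card •
              ((Q ^ n)⁻¹ * (1 / ((n : ℝ) * ((n : ℝ) + 1))))
          ≤ ∑ n ∈ Finset.Icc 1 N,
            (Finset.univ.filter (fun w => ℓ w = n)).card •
              ((Q ^ n)⁻¹ * (1 / ((n : ℝ) * ((n : ℝ) + 1)))) := by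
            apply Finset.sum_le_sum_of_subset_of_nonneg hsub
            intro n _ _
            positivity
        _ ≤ ∑ n ∈ Finset.Icc 1 N, (1 : ℝ) / ((n : ℝ) * ((n : ℝ) + 1)) := by
            apply Finset.sum_le_sum
            intro n hn
            rw [Finset.mem_Icc] at hn
            have hn1 : (1:ℝ) ≤ (n:ℝ) := by exact_mod_cast hn.1
            have hcard : ((Finset.univ.filter (fun w => ℓ w = n)).card : ℝ) ≤ Q ^ n := by
              have := count_fiber C hC n
              have h2 : ((Finset.univ.filter (fun w => ℓ w = n)).card : ℝ) ≤
                  ((Fintype.card Z ^ n : ℕ) : ℝ) := by exact_mod_cast this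
              calc ((Finset.univ.filter (fun w => ℓ w = n)).card : ℝ)
                  ≤ ((Fintype.card Z ^ n : ℕ) : ℝ) := h2
                _ = Q ^ n := by push_cast [hQdef]; ring
            rw [nsmul_eq_mul]
            calc ((Finset.univ.filter (fun w => ℓ w = n)).card : ℝ) *
                  ((Q ^ n)⁻¹ * (1 / ((n : ℝ) * ((n : ℝ) + 1))))
                ≤ Q ^ n * ((Q ^ n)⁻¹ * (1 / ((n : ℝ) * ((n : ℝ) + 1)))) := by
                  apply mul_le_mul_of_nonneg_right hcard
                  positivity
              _ = 1 / ((n : ℝ) * ((n : ℝ) + 1)) := by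
                  rw [← mul_assoc, mul_inv_cancel₀ (by positivity)]; ring
        _ ≤ 1 := telescope_sum N
    -- Gibbs
    have hgibbs : H ≤ ∑ w, p w * Real.logb Q (1 / r w) :=
      gibbs_ineq hQ1 p r hp0 hp1 hrpos hrsum
    -- evaluate logb (1 / r w)
    have heval : ∀ w, Real.logb Q (1 / r w) ≤ (ℓ w : ℝ) + 2 * Real.logb Q ((ℓ w : ℝ) + 1) := by
      intro w
      have hn1 : (1:ℝ) ≤ (ℓ w : ℝ) := by exact_mod_cast hℓ1 w
      have h1 : 1 / r w = Q ^ ℓ w * ((ℓ w : ℝ) * ((ℓ w : ℝ) + 1)) := by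
        rw [hrdef]
        field_simp
      rw [h1, Real.logb_mul (by positivity) (by positivity)]
      have h2 : Real.logb Q (Q ^ ℓ w) = (ℓ w : ℝ) := by
        rw [Real.logb_pow, Real.logb_self_eq_one hQ1]
        ring
      rw [h2]
      have h3 : Real.logb Q ((ℓ w : ℝ) * ((ℓ w : ℝ) + 1)) ≤
          Real.logb Q (((ℓ w : ℝ) + 1) ^ 2) := by
        apply (Real.logb_le_logb hQ1 (by positivity) (by positivity)).mpr
        nlinarith
      have h4 : Real.logb Q (((ℓ w : ℝ) + 1) ^ 2) = 2 * Real.logb Q ((ℓ w : ℝ) + 1) := by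
        rw [Real.logb_pow]; push_cast; ring
      linarith
    have hsum2 : ∑ w, p w * Real.logb Q (1 / r w) ≤
        ∑ w, p w * ((ℓ w : ℝ) + 2 * Real.logb Q ((ℓ w : ℝ) + 1)) := by
      apply Finset.sum_le_sum
      intro w _
      exact mul_le_mul_of_nonneg_left (heval w) (hp0 w)
    -- Jensen
    have hjensen : ∑ w, p w * Real.logb Q ((ℓ w : ℝ) + 1) ≤ Real.logb Q (L + 1) := by
      have hcc : ConcaveOn ℝ (Set.Ioi 0) Real.log := strictConcaveOn_log_Ioi.concaveOn
      have hj := hcc.le_map_sum (t := Finset.univ) (w := p) (p := fun w => (ℓ w : ℝ) + 1)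
        (fun w _ => hp0 w) hp1 (fun w _ => by
          simp only [Set.mem_Ioi]; positivity)
      simp only [smul_eq_mul] at hj
      have hLL : ∑ w, p w * ((ℓ w : ℝ) + 1) = L + 1 := by
        have hstep : ∑ w, p w * ((ℓ w : ℝ) + 1) = (∑ w, p w * (ℓ w : ℝ)) + ∑ w, p w := by
          rw [← Finset.sum_add_distrib]
          exact Finset.sum_congr rfl fun w _ => by ring
        rw [hstep, hp1]
      rw [hLL] at hj
      have : ∑ w, p w * Real.logb Q ((ℓ w : ℝ) + 1) =
          (∑ w, p w * Real.log ((ℓ w : ℝ) + 1)) / Real.log Q := by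
        rw [Finset.sum_div]
        apply Finset.sum_congr rfl
        intro w _
        rw [Real.logb]
        ring
      rw [this, Real.logb]
      exact div_le_div_of_nonneg_right hj hlogQ.le
    have hsplit : ∑ w, p w * ((ℓ w : ℝ) + 2 * Real.logb Q ((ℓ w : ℝ) + 1)) =
        L + 2 * ∑ w, p w * Real.logb Q ((ℓ w : ℝ) + 1) := by
      rw [hLdef, Finset.mul_sum, ← Finset.sum_add_distrib]
      apply Finset.sum_congr rfl
      intro w _
      ring
    rw [hsplit] at hsum2
    linarith
  -- conclude
  show L ≥ H - 2 * Real.logb Q (H + Q)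
  rcases le_or_gt L H with hLH | hLH
  · have hmono : Real.logb Q (L + 1) ≤ Real.logb Q (H + Q) := by
      apply (Real.logb_le_logb hQ1 (by linarith) (by linarith)).mpr
      linarith
    linarith
  · have hnn : 0 ≤ Real.logb Q (H + Q) := Real.logb_nonneg hQ1 (by linarith)
    linarith
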